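/- Let A_n = \sum_{k=0}^n \binom{n}{k}^2 \binom{n+k}{k}^2 be the Ap\'ery numbers. For every prime p with p \equiv 1 or 3 mod 8, \sum_{k=0}^{p-1} (1 + 2k) A_k \equiv p mod p^3. -/

import Mathlib

open Finset

/-- The Apéry numbers for `ζ(3)`: `A n = ∑_{k≤n} binom(n,k)² binom(n+k,k)²`. -/
def apery (n : ℕ) : ℤ :=
  ∑ k ∈ Finset.range (n + 1), (Nat.choose n k : ℤ) ^ 2 * (Nat.choose (n + k) k : ℤ) ^ 2

namespace AperyAux

open Nat

lemma neg_one_pow_sq' {K : Type*} [Monoid K] [HasDistribNeg K] (k : ℕ) :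
    ((-1 : K)^k)^2 = 1 := by
  rw [← pow_mul, mul_comm, pow_mul]; simp

lemma asc_fact' (n : ℕ) : ∀ s : ℕ, (n + s)! = n ! * ∏ t ∈ range s, (n+1+t)
  | 0 => by simp
  | s+1 => by
    rw [Finset.prod_range_succ, ← mul_assoc, ← asc_fact' n s, ← Nat.add_assoc, Nat.factorial_succ]
    ring

lemma prod_sym' (x : ℤ) : ∀ i : ℕ, ∏ t ∈ range (2*i+1), (x + (i:ℤ) - (t:ℤ))
    = x * ∏ t ∈ range i, (x^2 - ((t:ℤ)+1)^2)
  | 0 => by simp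
  | i+1 => by
    have h1 : 2*(i+1)+1 = (2*i+2)+1 := by ring_nf
    rw [h1, Finset.prod_range_succ, Finset.prod_range_succ']
    have h2 : ∏ t ∈ range (2*i+1), (x + ((i+1:ℕ):ℤ) - ((t+1:ℕ):ℤ))
        = ∏ t ∈ range (2*i+1), (x + (i:ℤ) - (t:ℤ)) := by
      apply Finset.prod_congr rfl; intro t _; push_cast; ring
    rw [h2, prod_sym' x i, Finset.prod_range_succ]
    push_cast
    ring

lemma prod_cast_fact (K : Type*) [CommRing K] (n : ℕ) :
    (∏ t ∈ range n, ((t:K)+1)) = ((n ! : ℕ) : K) := by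
  rw [← Finset.prod_range_add_one_eq_factorial]
  push_cast
  rfl

lemma key_binom (n j : ℕ) (hj : j ≤ n) :
    (2*j+1 : ℤ) * (Nat.choose (2*j) j : ℤ)^2 *
      ((Nat.choose (n+1+j) (2*j+1) : ℤ)^2 - (Nat.choose (n+j) (2*j+1) : ℤ)^2)
    = (2*n+1) * (Nat.choose n j : ℤ)^2 * (Nat.choose (n+j) j : ℤ)^2 := by
  have h1 : Nat.choose (n+j) (2*j+1) * (2*j+1) = Nat.choose (n+j) (2*j) * (n - j) := by
    have := Nat.choose_succ_right_eq (n+j) (2*j)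
    simpa [show n + j - 2*j = n - j by omega] using this
  have h2 : (n+j+1) * Nat.choose (n+j) (2*j) = Nat.choose (n+j+1) (2*j+1) * (2*j+1) :=
    Nat.add_one_mul_choose_eq (n+j) (2*j)
  have h3 : Nat.choose (n+j) (2*j) * Nat.choose (2*j) j
      = Nat.choose (n+j) j * Nat.choose n j := by
    have := Nat.choose_mul (n := n+j) (k := 2*j) (s := j) (by omega)
    simpa [show n + j - j = n by omega, show 2*j - j = j by omega] using this
  have e1 : (Nat.choose (n+j) (2*j+1) : ℤ) * (2*j+1)
      = (Nat.choose (n+j) (2*j) : ℤ) * ((n:ℤ) - j) := by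
    have := congrArg (Nat.cast (R := ℤ)) h1
    push_cast [Nat.cast_sub hj] at this
    linarith [this]
  have e2 : ((n:ℤ)+j+1) * (Nat.choose (n+j) (2*j) : ℤ)
      = (Nat.choose (n+j+1) (2*j+1) : ℤ) * (2*j+1) := by exact_mod_cast h2
  have e3 : ((Nat.choose (n+j) (2*j) : ℤ)) * (Nat.choose (2*j) j : ℤ)
      = (Nat.choose (n+j) j : ℤ) * (Nat.choose n j : ℤ) := by exact_mod_cast h3
  have c1 : (Nat.choose (n+j) (2*j+1) : ℤ) * (2*j+1) * (Nat.choose (2*j) j : ℤ)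
      = ((n:ℤ) - j) * ((Nat.choose n j : ℤ) * (Nat.choose (n+j) j : ℤ)) := by
    rw [e1]; linear_combination ((n:ℤ) - j) * e3
  have c2 : (Nat.choose (n+1+j) (2*j+1) : ℤ) * (2*j+1) * (Nat.choose (2*j) j : ℤ)
      = ((n:ℤ) + 1 + j) * ((Nat.choose n j : ℤ) * (Nat.choose (n+j) j : ℤ)) := by
    have hr : n+1+j = n+j+1 := by omega
    rw [hr, ← e2]; linear_combination ((n:ℤ)+j+1) * e3
  have hd : (2*(j:ℤ)+1) ≠ 0 := by positivity
  apply mul_left_cancel₀ hd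
  linear_combination
    ((Nat.choose (n+1+j) (2*j+1) : ℤ) * (2*j+1) * (Nat.choose (2*j) j : ℤ)
      + ((n:ℤ) + 1 + j) * ((Nat.choose n j : ℤ) * (Nat.choose (n+j) j : ℤ))) * c2
    - ((Nat.choose (n+j) (2*j+1) : ℤ) * (2*j+1) * (Nat.choose (2*j) j : ℤ)
      + ((n:ℤ) - j) * ((Nat.choose n j : ℤ) * (Nat.choose (n+j) j : ℤ))) * c1

lemma apery_sum_id (n : ℕ) :
    ∑ k ∈ Finset.range n, (1 + 2 * (k : ℤ)) * apery k
    = ∑ j ∈ Finset.range n,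
        (2*j+1 : ℤ) * (Nat.choose (2*j) j : ℤ)^2 * (Nat.choose (n+j) (2*j+1) : ℤ)^2 := by
  induction n with
  | zero => simp
  | succ n ih =>
    rw [Finset.sum_range_succ, ih]
    have hext : ∑ j ∈ Finset.range n,
        (2*j+1 : ℤ) * (Nat.choose (2*j) j : ℤ)^2 * (Nat.choose (n+j) (2*j+1) : ℤ)^2
        = ∑ j ∈ Finset.range (n+1),
        (2*j+1 : ℤ) * (Nat.choose (2*j) j : ℤ)^2 * (Nat.choose (n+j) (2*j+1) : ℤ)^2 := by
      rw [Finset.sum_range_succ, Nat.choose_eq_zero_of_lt (show n + n < 2*n+1 by omega)]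
      simp
    rw [hext]
    have hdiff : ∑ j ∈ Finset.range (n+1),
        ((2*j+1 : ℤ) * (Nat.choose (2*j) j : ℤ)^2 * (Nat.choose (n+1+j) (2*j+1) : ℤ)^2
         - (2*j+1 : ℤ) * (Nat.choose (2*j) j : ℤ)^2 * (Nat.choose (n+j) (2*j+1) : ℤ)^2)
        = (1 + 2*(n:ℤ)) * apery n := by
      rw [apery, Finset.mul_sum]
      apply Finset.sum_congr rfl
      intro j hj
      have hj' : j ≤ n := by simpa [Nat.lt_succ_iff] using hj
      have := key_binom n j hj'
      linear_combination this
    rw [Finset.sum_sub_distrib] at hdiff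
    linarith [hdiff]

lemma wilson_pair (p r : ℕ) (hp : p.Prime) (hr : r ≤ p - 1) :
    (((p-1-r)! : ℕ) : ZMod p) * ((r ! : ℕ) : ZMod p) = (-1)^(r+1) := by
  haveI : Fact p.Prime := ⟨hp⟩
  have hw : (((p-1)! : ℕ) : ZMod p) = -1 := ZMod.wilsons_lemma p
  have hN : (p-1-r)! * (p-1).descFactorial r = (p-1)! := by
    have := Nat.factorial_mul_descFactorial (n := p-1) (k := r) hr
    exact this
  have hdc : (((p-1).descFactorial r : ℕ) : ZMod p) = (-1)^r * ((r ! : ℕ) : ZMod p) := by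
    rw [Nat.descFactorial_eq_prod_range]
    push_cast
    have h1 : ∏ t ∈ range r, (((p-1-t : ℕ)) : ZMod p) = ∏ t ∈ range r, (-1) * ((t:ZMod p)+1) := by
      apply Finset.prod_congr rfl; intro t ht
      have ht' : t < r := Finset.mem_range.mp ht
      rw [Nat.cast_sub (show t ≤ p - 1 by omega), Nat.cast_sub (show 1 ≤ p by omega)]
      rw [ZMod.natCast_self]
      push_cast
      ring
    rw [h1, Finset.prod_mul_distrib, Finset.prod_const, Finset.card_range,
      prod_cast_fact]
  have hcast := congrArg (Nat.cast (R := ZMod p)) hN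
  push_cast at hcast
  rw [hdc, hw] at hcast
  have hsq := neg_one_pow_sq' (K := ZMod p) r
  linear_combination ((-1 : ZMod p)^r) * hcast
    - (((p-1-r)! : ℕ) : ZMod p) * ((r ! : ℕ) : ZMod p) * hsq

lemma partB (p m i j : ℕ) (hp : p.Prime) (hm : p = 2*m+1) (hi : i < m) (hij : i + j + 1 = p) :
    (p:ℤ)^3 ∣ (2*(i:ℤ)+1) * (Nat.choose (2*i) i : ℤ)^2 * (Nat.choose (p+i) (2*i+1) : ℤ)^2
      + (2*(j:ℤ)+1) * (Nat.choose (2*j) j : ℤ)^2 * (Nat.choose (p+j) (2*j+1) : ℤ)^2 := by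
  haveI : Fact p.Prime := ⟨hp⟩
  set K := ZMod p
  have hmj : m < j := by omega
  set s := p - 2 - 2*i with hsdef
  have hs : p + s = 2*j := by omega
  have hs' : s = p - 1 - (2*i+1) := by omega
  -- divisibilities
  obtain ⟨a, ha⟩ : p ∣ Nat.choose (p+i) (2*i+1) :=
    Nat.Prime.dvd_choose hp (show 2*i+1 < p by omega) (show p+i - (2*i+1) < p by omega) (by omega)
  obtain ⟨c, hc⟩ : p ∣ Nat.choose (2*j) j :=
    Nat.Prime.dvd_choose hp (show j < p by omega) (show 2*j - j < p by omega) (by omega)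
  have hpne : ((p:ℕ):ℤ) ≠ 0 := Int.natCast_ne_zero.mpr hp.pos.ne' 
  -- E1 : a * (2i+1)! = (-1)^i * (i!)^2 in K
  have hE1 : ((a:ℕ):K) * (((2*i+1)! : ℕ):K) = (-1)^i * ((i ! : ℕ):K)^2 := by
    have hZ : ((a:ℕ):ℤ) * (((2*i+1)! : ℕ):ℤ) = ∏ t ∈ range i, ((p:ℤ)^2 - ((t:ℤ)+1)^2) := by
      have hdf : ((p+i).descFactorial (2*i+1) : ℤ) = ((2*i+1)! : ℤ) * ((p:ℤ) * (a:ℤ)) := by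
        rw [Nat.descFactorial_eq_factorial_mul_choose, ha]; push_cast; ring
      have hprod : ((p+i).descFactorial (2*i+1) : ℤ) = ∏ t ∈ range (2*i+1), ((p:ℤ) + (i:ℤ) - (t:ℤ)) := by
        rw [Nat.descFactorial_eq_prod_range]
        push_cast
        apply Finset.prod_congr rfl; intro t ht
        have ht' : t < 2*i+1 := Finset.mem_range.mp ht
        rw [Nat.cast_sub (show t ≤ p + i by omega)]
        push_cast; ring
      rw [prod_sym' (p:ℤ) i] at hprod
      apply mul_left_cancel₀ hpne
      rw [← hprod, hdf]; ring
    have := congrArg (Int.cast (R := K)) hZ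
    push_cast +zetaDelta at this
    rw [this]
    have h0 : ((p:ℕ):K) = 0 := ZMod.natCast_self p
    have h1 : ∏ t ∈ range i, (((p:ℕ):K)^2 - ((t:K)+1)^2) = ∏ t ∈ range i, (-1) * ((t:K)+1)^2 := by
      apply Finset.prod_congr rfl; intro t _
      rw [h0]; ring
    rw [h1, Finset.prod_mul_distrib, Finset.prod_const, Finset.card_range, Finset.prod_pow,
      prod_cast_fact]
  -- E2 : c * (j!)^2 = -(s!) in K
  have hE2 : ((c:ℕ):K) * ((j ! : ℕ):K)^2 = -(((s ! : ℕ)):K) := by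
    have hN1 : Nat.choose (2*j) j * j ! * j ! = (2*j)! := by
      have := Nat.choose_mul_factorial_mul_factorial (show j ≤ 2*j by omega)
      rwa [show 2*j - j = j by omega] at this
    have hN2 : (2*j)! = p ! * ∏ t ∈ range s, (p+1+t) := by
      rw [← hs]; exact asc_fact' p s
    have hpfact : p ! = p * (p-1)! := by
      conv_lhs => rw [← Nat.sub_add_cancel hp.one_le]
      rw [Nat.factorial_succ, Nat.sub_add_cancel hp.one_le]
    have hZ : ((c:ℕ):ℤ) * ((j ! : ℕ):ℤ)^2 = (((p-1)! : ℕ):ℤ) * ∏ t ∈ range s, ((p:ℤ)+1+(t:ℤ)) := by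
      apply mul_left_cancel₀ hpne
      have := congrArg (Nat.cast (R := ℤ)) (hN1.trans hN2)
      rw [hc, hpfact] at this
      push_cast at this
      linear_combination this
    have := congrArg (Int.cast (R := K)) hZ
    push_cast +zetaDelta at this
    rw [this]
    have h0 : ((p:ℕ):K) = 0 := ZMod.natCast_self p
    have hw : (((p-1)! : ℕ) : K) = -1 := ZMod.wilsons_lemma p
    have h1 : ∏ t ∈ range s, (((p:ℕ):K)+1+(t:K)) = ∏ t ∈ range s, ((t:K)+1) := by
      apply Finset.prod_congr rfl; intro t _; rw [h0]; ring
    rw [hw, h1, prod_cast_fact]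
    ring
  -- E3 : V * (i!)^2 = (-1)^i * (2i)! in K
  have hVsym : Nat.choose (p+j) (2*j+1) = Nat.choose (p+j) i := by
    have h := Nat.choose_symm (n := p+j) (k := 2*j+1) (by omega)
    rw [show p + j - (2*j+1) = i by omega] at h
    exact h.symm
  have hjK : ((j:ℕ):K) = -1 - ((i:ℕ):K) := by
    have := congrArg (Nat.cast (R := K)) hij
    push_cast at this
    rw [ZMod.natCast_self] at this
    linear_combination this
  have hE3 : ((Nat.choose (p+j) (2*j+1) : ℕ):K) * ((i ! : ℕ):K)^2
      = (-1)^i * (((2*i)! : ℕ):K) := by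
    rw [hVsym]
    have hdf : ((p+j).descFactorial i : ℕ) = i ! * Nat.choose (p+j) i :=
      Nat.descFactorial_eq_factorial_mul_choose _ _
    have hdfK : (((p+j).descFactorial i : ℕ):K) = (-1)^i * ∏ t ∈ range i, ((i:K)+1+(t:K)) := by
      rw [Nat.descFactorial_eq_prod_range]
      push_cast +zetaDelta
      have h1 : ∏ t ∈ range i, (((p+j-t : ℕ)) : K) = ∏ t ∈ range i, (-1) * ((i:K)+1+(t:K)) := by
        apply Finset.prod_congr rfl; intro t ht
        have ht' : t < i := Finset.mem_range.mp ht
        rw [Nat.cast_sub (show t ≤ p + j by omega)]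
        push_cast [hjK]
        rw [show ((p:ℕ):K) = 0 from ZMod.natCast_self p]
        ring
      rw [h1, Finset.prod_mul_distrib, Finset.prod_const, Finset.card_range]
    have hasc : (((2*i)! : ℕ):K) = ((i ! : ℕ):K) * ∏ t ∈ range i, ((i:K)+1+(t:K)) := by
      have := congrArg (Nat.cast (R := K)) (show (2*i)! = i ! * ∏ t ∈ range i, (i+1+t) by
        rw [show 2*i = i + i by ring]; exact asc_fact' i i)
      push_cast +zetaDelta at this
      rw [this]
    have hdfc := congrArg (Nat.cast (R := K)) hdf
    push_cast +zetaDelta at hdfc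
    rw [hdfK] at hdfc
    -- hdfc : (-1)^i * ∏ = i! * C
    -- goal : C * (i!)^2 = (-1)^i * (2i)!
    rw [hasc]
    linear_combination (-((i ! : ℕ):K)) * hdfc
  -- E4
  have hE4 : ((Nat.choose (2*i) i : ℕ):K) * ((i ! : ℕ):K)^2 = (((2*i)! : ℕ):K) := by
    have := Nat.choose_mul_factorial_mul_factorial (show i ≤ 2*i by omega)
    rw [show 2*i - i = i by omega] at this
    have := congrArg (Nat.cast (R := K)) this
    push_cast +zetaDelta at this
    linear_combination this
  -- E5
  have hE5 : ((s ! : ℕ):K) * (((2*i+1)! : ℕ):K) = 1 := by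
    have := wilson_pair p (2*i+1) hp (by omega)
    rw [← hs'] at this
    rw [this]
    rw [show 2*i+1+1 = 2*(i+1) by ring, pow_mul]
    simp
  -- E6
  have hE6 : ((j ! : ℕ):K) * ((i ! : ℕ):K) = (-1)^(i+1) := by
    have := wilson_pair p i hp (by omega)
    rw [show p - 1 - i = j by omega] at this
    exact this
  -- nonzero facts
  have hnz : ∀ n : ℕ, n < p → ((n ! : ℕ):K) ≠ 0 := by
    intro n hn hzero
    rw [ZMod.natCast_eq_zero_iff] at hzero
    rw [Nat.Prime.dvd_factorial hp] at hzero
    omega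
  have hFi : ((i ! : ℕ):K) ≠ 0 := hnz i (by omega)
  have hF2i1 : (((2*i+1)! : ℕ):K) ≠ 0 := hnz (2*i+1) (by omega)
  -- P1
  have hP1 : ((Nat.choose (2*i) i : ℕ):K) * ((a:ℕ):K) * (((2*i+1)! : ℕ):K)
      = (-1)^i * (((2*i)! : ℕ):K) := by
    apply mul_right_cancel₀ (pow_ne_zero 2 hFi)
    linear_combination ((a:ℕ):K) * (((2*i+1)! : ℕ):K) * hE4 + (((2*i)! : ℕ):K) * hE1
  -- P2
  have hsqj : (((j ! : ℕ):K) * ((i ! : ℕ):K))^2 = 1 := by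
    rw [hE6]; exact neg_one_pow_sq' (i+1)
  have hP2 : ((c:ℕ):K) * ((Nat.choose (p+j) (2*j+1) : ℕ):K) * (((2*i+1)! : ℕ):K)
      = (-1)^(i+1) * (((2*i)! : ℕ):K) := by
    have h := calc ((c:ℕ):K) * ((Nat.choose (p+j) (2*j+1) : ℕ):K) * (((2*i+1)! : ℕ):K)
          * ((((j ! : ℕ):K) * ((i ! : ℕ):K))^2)
        = (((c:ℕ):K) * ((j ! : ℕ):K)^2) * (((Nat.choose (p+j) (2*j+1) : ℕ):K) * ((i ! : ℕ):K)^2)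
          * (((2*i+1)! : ℕ):K) := by ring
      _ = (-((s ! : ℕ):K)) * ((-1)^i * (((2*i)! : ℕ):K)) * (((2*i+1)! : ℕ):K) := by
          rw [hE2, hE3]
      _ = (-1)^(i+1) * (((2*i)! : ℕ):K) * (((s ! : ℕ):K) * (((2*i+1)! : ℕ):K)) := by
          ring
      _ = (-1)^(i+1) * (((2*i)! : ℕ):K) := by rw [hE5, mul_one]
    rw [hsqj, mul_one] at h
    exact h
  -- square equality
  have hsq : (((Nat.choose (2*i) i : ℕ):K) * ((a:ℕ):K))^2
      = (((c:ℕ):K) * ((Nat.choose (p+j) (2*j+1) : ℕ):K))^2 := by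
    apply mul_right_cancel₀ (pow_ne_zero 2 hF2i1)
    have q1 := congrArg (fun x => x^2) hP1
    have q2 := congrArg (fun x => x^2) hP2
    linear_combination q1 - q2 + (((2*i)! : ℕ):K)^2 * (neg_one_pow_sq' (K := K) i)
      - (((2*i)! : ℕ):K)^2 * (neg_one_pow_sq' (K := K) (i+1))
  -- conclude p ∣ w
  have hwz : ((( (2*(i:ℤ)+1) * ((Nat.choose (2*i) i : ℕ):ℤ)^2 * ((a:ℕ):ℤ)^2
      + (2*(j:ℤ)+1) * ((c:ℕ):ℤ)^2 * ((Nat.choose (p+j) (2*j+1) : ℕ):ℤ)^2 : ℤ)) : K) = 0 := by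
    push_cast +zetaDelta
    rw [hjK]
    linear_combination (2*((i:ℕ):K)+1) * hsq
  have hpw := (ZMod.intCast_zmod_eq_zero_iff_dvd _ p).mp hwz
  obtain ⟨w', hw'⟩ := hpw
  -- final assembly
  have hfw : (2*(i:ℤ)+1) * (Nat.choose (2*i) i : ℤ)^2 * (Nat.choose (p+i) (2*i+1) : ℤ)^2
      + (2*(j:ℤ)+1) * (Nat.choose (2*j) j : ℤ)^2 * (Nat.choose (p+j) (2*j+1) : ℤ)^2
      = (p:ℤ)^2 * ((2*(i:ℤ)+1) * ((Nat.choose (2*i) i : ℕ):ℤ)^2 * ((a:ℕ):ℤ)^2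
      + (2*(j:ℤ)+1) * ((c:ℕ):ℤ)^2 * ((Nat.choose (p+j) (2*j+1) : ℕ):ℤ)^2) := by
    rw [show ((Nat.choose (p+i) (2*i+1) : ℕ):ℤ) = (p:ℤ) * ((a:ℕ):ℤ) by exact_mod_cast congrArg (Nat.cast (R:=ℤ)) ha,
       show ((Nat.choose (2*j) j : ℕ):ℤ) = (p:ℤ) * ((c:ℕ):ℤ) by exact_mod_cast congrArg (Nat.cast (R:=ℤ)) hc]
    ring
  rw [hfw, hw']
  exact ⟨w', by ring⟩


lemma partA (p m : ℕ) (hp : p.Prime) (hm : p = 2*m+1) :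
    (p:ℤ)^3 ∣ (2*(m:ℤ)+1) * (Nat.choose (2*m) m : ℤ)^2 * (Nat.choose (p+m) (2*m+1) : ℤ)^2
      - (p:ℤ) := by
  have hpz : ((p:ℕ) : ℤ) = 2*(m:ℤ)+1 := by rw [hm]; push_cast; ring
  have hsym : Nat.choose (p+m) (2*m+1) = Nat.choose (p+m) m := by
    have h := Nat.choose_symm (n := p+m) (k := 2*m+1) (by omega)
    rw [show p + m - (2*m+1) = m by omega] at h
    exact h.symm
  rw [hsym]
  set X : ℤ := (Nat.choose (2*m) m : ℤ) * (Nat.choose (p+m) m : ℤ) with hX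
  have hA2 : ((p+m).descFactorial m : ℤ) = (m ! : ℤ) * (Nat.choose (p+m) m : ℤ) := by
    exact_mod_cast congrArg (Nat.cast (R := ℤ)) (Nat.descFactorial_eq_factorial_mul_choose (p+m) m)
  have hA1 : ((2*m).descFactorial m : ℤ) = (m ! : ℤ) * (Nat.choose (2*m) m : ℤ) := by
    exact_mod_cast congrArg (Nat.cast (R := ℤ)) (Nat.descFactorial_eq_factorial_mul_choose (2*m) m)
  have hd2 : ((2*m).descFactorial m : ℤ) = ∏ t ∈ range m, ((p:ℤ) - 1 - (t:ℤ)) := by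
    rw [Nat.descFactorial_eq_prod_range]
    push_cast
    apply Finset.prod_congr rfl; intro t ht
    have ht' : t < m := Finset.mem_range.mp ht
    rw [Nat.cast_sub (by omega)]
    push_cast [hpz]
    ring
  have hdp : ((p+m).descFactorial m : ℤ) = ∏ t ∈ range m, ((p:ℤ) + 1 + (t:ℤ)) := by
    rw [Nat.descFactorial_eq_prod_range]
    push_cast
    have hrefl := Finset.prod_range_reflect (fun t => ((p:ℤ) + 1 + (t:ℤ))) m
    rw [← hrefl]
    apply Finset.prod_congr rfl; intro t ht
    have ht' : t < m := Finset.mem_range.mp ht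
    rw [Nat.cast_sub (show t ≤ p + m by omega),
        Nat.cast_sub (show t ≤ m - 1 by omega),
        Nat.cast_sub (show 1 ≤ m by omega)]
    push_cast
    ring
  have hkey : X * ((m ! : ℤ))^2 = ∏ t ∈ range m, ((p:ℤ)^2 - ((t:ℤ)+1)^2) := by
    have hfne : ((m ! : ℕ) : ℤ) ≠ 0 := by positivity
    have hprodeq : (∏ t ∈ range m, ((p:ℤ) - 1 - (t:ℤ))) * ∏ t ∈ range m, ((p:ℤ) + 1 + (t:ℤ))
        = ∏ t ∈ range m, ((p:ℤ)^2 - ((t:ℤ)+1)^2) := by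
      rw [← Finset.prod_mul_distrib]
      apply Finset.prod_congr rfl; intro t _; ring
    have h1 : ((2*m).descFactorial m : ℤ) * ((p+m).descFactorial m : ℤ)
        = ∏ t ∈ range m, ((p:ℤ)^2 - ((t:ℤ)+1)^2) := by rw [hd2, hdp]; exact hprodeq
    rw [hA1, hA2] at h1
    apply mul_left_cancel₀ (pow_ne_zero 2 hfne)
    rw [hX]
    linear_combination ((m !:ℕ):ℤ)^2 * h1 - (((m !:ℕ):ℤ)^2 - 1) * h1 + (((m !:ℕ):ℤ)^2 - 1) * h1
  have hmod : (p:ℤ)^2 ∣ (∏ t ∈ range m, ((p:ℤ)^2 - ((t:ℤ)+1)^2)) - (-1)^m * ((m ! : ℤ))^2 := by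
    have h0 : (((p:ℕ):ZMod (p^2)))^2 = 0 := by
      have h1 : (((p^2 : ℕ) : ZMod (p^2))) = 0 := ZMod.natCast_self _
      push_cast at h1
      exact h1
    have hz : ((((∏ t ∈ range m, ((p:ℤ)^2 - ((t:ℤ)+1)^2)) - (-1)^m * ((m ! : ℤ))^2 : ℤ)) : ZMod (p^2)) = 0 := by
      push_cast
      rw [h0]
      have h2 : (∏ t ∈ range m, ((0:ZMod (p^2)) - ((t:ZMod (p^2))+1)^2))
          = (-1)^m * ((m ! : ℕ) : ZMod (p^2))^2 := by
        have h3 : (∏ t ∈ range m, ((0:ZMod (p^2)) - ((t:ZMod (p^2))+1)^2))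
            = ∏ t ∈ range m, (-1) * ((t:ZMod (p^2))+1)^2 := by
          apply Finset.prod_congr rfl; intro t _; ring
        rw [h3, Finset.prod_mul_distrib, Finset.prod_const, Finset.card_range, Finset.prod_pow]
        have h4 : (∏ x ∈ range m, ((x:ZMod (p^2))+1)) = ((m ! :ℕ) : ZMod (p^2)) := by
          rw [← Finset.prod_range_add_one_eq_factorial]
          push_cast
          rfl
        rw [h4]
      rw [h2]
      ring
    have hdvd := (ZMod.intCast_zmod_eq_zero_iff_dvd _ (p^2)).mp hz
    push_cast at hdvd
    exact hdvd
  have hdvd1 : (p:ℤ)^2 ∣ (X - (-1)^m) * ((m ! : ℤ))^2 := by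
    have heq : (X - (-1)^m) * ((m ! : ℤ))^2
        = (∏ t ∈ range m, ((p:ℤ)^2 - ((t:ℤ)+1)^2)) - (-1)^m * ((m ! : ℤ))^2
          - ((∏ t ∈ range m, ((p:ℤ)^2 - ((t:ℤ)+1)^2)) - X * ((m ! : ℤ))^2) := by ring
    rw [heq, hkey]
    exact dvd_sub hmod (by simp)
  have hcop : IsCoprime ((p:ℤ)^2) (((m ! : ℤ))^2) := by
    apply IsCoprime.pow
    rw [Int.isCoprime_iff_gcd_eq_one]
    have hnd : ¬ p ∣ m ! := by
      rw [Nat.Prime.dvd_factorial hp]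
      omega
    have := (Nat.Prime.coprime_iff_not_dvd hp).mpr hnd
    simpa [Int.gcd_natCast_natCast] using this
  have hdvd2 : (p:ℤ)^2 ∣ X - (-1)^m := hcop.dvd_of_dvd_mul_right hdvd1
  have hdvd3 : (p:ℤ)^2 ∣ X^2 - 1 := by
    have heq : X^2 - 1 = (X - (-1)^m) * (X + (-1)^m) := by
      have := neg_one_pow_sq' (K := ℤ) m
      nlinarith [this]
    rw [heq]
    exact hdvd2.mul_right _
  have hfin : (2*(m:ℤ)+1) * (Nat.choose (2*m) m : ℤ)^2 * (Nat.choose (p+m) m : ℤ)^2 - (p:ℤ)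
      = (p:ℤ) * (X^2 - 1) := by
    rw [hX, hpz]; ring
  rw [hfin]
  have h3 : (p:ℤ)^3 = (p:ℤ) * (p:ℤ)^2 := by ring
  rw [h3]
  exact mul_dvd_mul_left _ hdvd3


end AperyAux

/-- For every prime `p ≡ 1, 3 mod 8`, `∑_{k<p} (1+2k) A_k ≡ p mod p³` in the integers. -/
theorem stmt_13 (p : ℕ) (hp : p.Prime) (hp8 : p % 8 = 1 ∨ p % 8 = 3) :
    (p : ℤ) ^ 3 ∣ (∑ k ∈ Finset.range p, (1 + 2 * (k : ℤ)) * apery k) - p := by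
  have hodd : p % 2 = 1 := by omega
  have hp2 : 2 ≤ p := hp.two_le
  obtain ⟨m, hm⟩ : ∃ m, p = 2*m+1 := ⟨p/2, by omega⟩
  rw [AperyAux.apery_sum_id p]
  set f : ℕ → ℤ := fun j =>
    (2*j+1 : ℤ) * (Nat.choose (2*j) j : ℤ)^2 * (Nat.choose (p+j) (2*j+1) : ℤ)^2 with hf
  have hsplit : ∑ j ∈ Finset.range p, f j
      = (∑ i ∈ Finset.range m, (f i + f (p-1-i))) + f m := by
    have h1 : ∑ j ∈ Finset.range p, f j
        = ∑ j ∈ Finset.range m, f j + ∑ t ∈ Finset.range (m+1), f (m+t) := by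
      rw [show p = m + (m+1) by omega]
      exact Finset.sum_range_add f m (m+1)
    have h2 : ∑ t ∈ Finset.range (m+1), f (m+t)
        = (∑ t ∈ Finset.range m, f (m+(t+1))) + f (m+0) :=
      Finset.sum_range_succ' (fun t => f (m+t)) m
    have h3 : ∑ t ∈ Finset.range m, f (m+(t+1)) = ∑ i ∈ Finset.range m, f (p-1-i) := by
      rw [← Finset.sum_range_reflect]
      apply Finset.sum_congr rfl
      intro i hi
      have hi' : i < m := Finset.mem_range.mp hi
      congr 1
      omega
    rw [h1, h2, h3, Finset.sum_add_distrib]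
    simp only [Nat.add_zero]
    ring
  rw [hsplit]
  have hmain : (∑ i ∈ Finset.range m, (f i + f (p-1-i))) + f m - (p:ℤ)
      = (∑ i ∈ Finset.range m, (f i + f (p-1-i))) + (f m - (p:ℤ)) := by ring
  rw [hmain]
  apply dvd_add
  · apply Finset.dvd_sum
    intro i hi
    have hi' : i < m := Finset.mem_range.mp hi
    exact AperyAux.partB p m i (p-1-i) hp hm hi' (by omega)
  · exact AperyAux.partA p m hp hm
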